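/- If G is an open cover of a space Y that is weakly regular for X × [0,1] (locally finite, and the union of every subcollection with nonempty intersection is an absolute extensor for X × [0,1]), then any two G-close continuous maps f, g : X → Y are st(G)-homotopic, where st(G) = { st(G, G) : G in G } is the cover by stars. Moreover the homotopy can be chosen such that whenever f(x) and g(x) both lie in some G in G, the path t ↦ H(x,t) lies in the star st(G, G) = union of all members of G meeting G. -/

import Mathlib

open Set Function

/-- `E ⊆ Z` is an absolute extensor for the space `W`. -/
def IsAE {Z : Type*} [TopologicalSpace Z] (E : Set Z)
    (W : Type*) [TopologicalSpace W] : Prop :=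
  ∀ A : Set W, IsClosed A → ∀ f : W → Z, ContinuousOn f A → MapsTo f A E →
    ∃ g : W → Z, Continuous g ∧ MapsTo g univ E ∧ EqOn g f A

/-- The star of an element `G` of the cover `𝒢`: the union of the members of `𝒢`
meeting `G`. -/
def coverStar {Y : Type*} (𝒢 : Set (Set Y)) (G : Set Y) : Set Y :=
  ⋃₀ {G' | G' ∈ 𝒢 ∧ (G' ∩ G).Nonempty}

set_option linter.unusedSectionVars false
set_option linter.unusedVariables false
set_option maxHeartbeats 1000000

section Aux

variable {X Y : Type*} [TopologicalSpace X] [TopologicalSpace Y]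
  (𝒢 : Set (Set Y)) (f g : X → Y)

/-- The members of `𝒢` containing both `f x` and `g x`. -/
def KK (x : X) : Set (Set Y) := {G | G ∈ 𝒢 ∧ f x ∈ G ∧ g x ∈ G}

def CC (n : ℕ) : Set X := {x | (KK 𝒢 f g x).ncard ≤ n}

def EE (n : ℕ) (S : Set (Set Y)) : Set X := {x | KK 𝒢 f g x = S ∧ S.ncard = n + 1}

def DD (n : ℕ) : Set (X × unitInterval) :=
  CC 𝒢 f g n ×ˢ univ ∪ univ ×ˢ ({0, 1} : Set unitInterval)

variable {𝒢 f g}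

theorem Kloc (hlf : LocallyFinite (fun G : 𝒢 => (G : Set Y))) (hf : Continuous f) (x : X) : ∃ U ∈ nhds x, ∃ T : Set (Set Y), T.Finite ∧
    ∀ x' ∈ U, KK 𝒢 f g x' ⊆ T := by
  obtain ⟨V, hV, hfin⟩ := hlf (f x)
  refine ⟨f ⁻¹' V, hf.continuousAt.preimage_mem_nhds hV,
    Subtype.val '' {G : 𝒢 | ((G : Set Y) ∩ V).Nonempty}, hfin.image _, ?_⟩
  rintro x' hx' G ⟨hG𝒢, hfG, hgG⟩
  exact ⟨⟨G, hG𝒢⟩, ⟨f x', hfG, hx'⟩, rfl⟩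

theorem Kfin (hlf : LocallyFinite (fun G : 𝒢 => (G : Set Y))) (hf : Continuous f) (x : X) : (KK 𝒢 f g x).Finite := by
  obtain ⟨U, hU, T, hT, hsub⟩ := Kloc hlf hf x
  exact hT.subset (hsub x (mem_of_mem_nhds hU))

theorem Kopen (hopen : ∀ G ∈ 𝒢, IsOpen G) (hf : Continuous f) (hg : Continuous g)
    {T : Set (Set Y)} (hTfin : T.Finite) (hT𝒢 : T ⊆ 𝒢) :
    IsOpen {x | T ⊆ KK 𝒢 f g x} := by
  have : {x | T ⊆ KK 𝒢 f g x} = ⋂ G ∈ T, (f ⁻¹' G ∩ g ⁻¹' G) := by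
    ext x
    simp only [mem_setOf_eq, mem_iInter, mem_inter_iff, mem_preimage]
    constructor
    · intro h G hG; exact ⟨(h hG).2.1, (h hG).2.2⟩
    · intro h G hG; exact ⟨hT𝒢 hG, (h G hG).1, (h G hG).2⟩
  rw [this]
  exact hTfin.isOpen_biInter fun G hG =>
    ((hopen G (hT𝒢 hG)).preimage hf).inter ((hopen G (hT𝒢 hG)).preimage hg)

theorem CCclosed (hlf : LocallyFinite (fun G : 𝒢 => (G : Set Y)))
    (hopen : ∀ G ∈ 𝒢, IsOpen G) (hf : Continuous f) (hg : Continuous g) (n : ℕ) :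
    IsClosed (CC 𝒢 f g n) := by
  rw [← isOpen_compl_iff]
  rw [isOpen_iff_forall_mem_open]
  intro x hx
  have hx' : n + 1 ≤ (KK 𝒢 f g x).ncard := by
    have hnot : ¬ (KK 𝒢 f g x).ncard ≤ n := hx
    omega
  obtain ⟨T, hTsub, hTcard⟩ := Set.exists_subset_card_eq hx'
  have hTfin : T.Finite := (Kfin hlf hf x).subset hTsub
  have hT𝒢 : T ⊆ 𝒢 := fun G hG => (hTsub hG).1
  refine ⟨{x' | T ⊆ KK 𝒢 f g x'}, ?_, Kopen hopen hf hg hTfin hT𝒢, hTsub⟩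
  intro x' hx'
  simp only [CC, mem_compl_iff, mem_setOf_eq, not_le, Nat.lt_iff_add_one_le]
  calc n + 1 = T.ncard := hTcard.symm
    _ ≤ (KK 𝒢 f g x').ncard := Set.ncard_le_ncard hx' (Kfin hlf hf x')

theorem closure_EE (hopen : ∀ G ∈ 𝒢, IsOpen G) (hf : Continuous f) (hg : Continuous g)
    {n : ℕ} {S : Set (Set Y)} {x : X} (hx : x ∈ closure (EE 𝒢 f g n S)) :
    KK 𝒢 f g x ⊆ S := by
  intro G hG
  have hopen' : IsOpen {x' | ({G} : Set (Set Y)) ⊆ KK 𝒢 f g x'} :=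
    Kopen hopen hf hg (finite_singleton G) (by simpa using hG.1)
  have hxmem : x ∈ {x' | ({G} : Set (Set Y)) ⊆ KK 𝒢 f g x'} := by
    simpa using hG
  obtain ⟨x', hx'O, hx'E⟩ := mem_closure_iff.1 hx _ hopen' hxmem
  have : G ∈ KK 𝒢 f g x' := hx'O rfl
  rw [hx'E.1] at this
  exact this

theorem closure_EE_cap_C (hlf : LocallyFinite (fun G : 𝒢 => (G : Set Y)))
    (hopen : ∀ G ∈ 𝒢, IsOpen G) (hf : Continuous f) (hg : Continuous g)
    {n : ℕ} {S : Set (Set Y)} {x : X} (hx : x ∈ closure (EE 𝒢 f g n S))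
    (hxC : x ∈ CC 𝒢 f g (n + 1)) : x ∈ EE 𝒢 f g n S ∪ CC 𝒢 f g n := by
  rcases eq_empty_or_nonempty (EE 𝒢 f g n S) with hE | ⟨x₀, hx₀⟩
  · rw [hE, closure_empty] at hx; exact absurd hx (notMem_empty x)
  have hScard : S.ncard = n + 1 := hx₀.2
  have hSfin : S.Finite := hx₀.1 ▸ Kfin hlf hf x₀
  have hKS : KK 𝒢 f g x ⊆ S := closure_EE hopen hf hg hx
  rcases le_or_gt (KK 𝒢 f g x).ncard n with h | h
  · exact Or.inr h
  · left
    have hle : S.ncard ≤ (KK 𝒢 f g x).ncard := by omega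
    exact ⟨Set.eq_of_subset_of_ncard_le hKS hle hSfin, hScard⟩

theorem EE_disjoint {n : ℕ} {S S' : Set (Set Y)} {x : X}
    (h : x ∈ EE 𝒢 f g n S) (h' : x ∈ EE 𝒢 f g n S') : S = S' :=
  h.1 ▸ h'.1

theorem EElf (hlf : LocallyFinite (fun G : 𝒢 => (G : Set Y))) (hf : Continuous f) (n : ℕ) :
    LocallyFinite (fun S : Set (Set Y) => EE 𝒢 f g n S) := by
  intro x
  obtain ⟨U, hU, T, hTfin, hsub⟩ := Kloc hlf hf x
  refine ⟨U, hU, (hTfin.finite_subsets).subset ?_⟩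
  rintro S ⟨x', hx'E, hx'U⟩
  exact hx'E.1 ▸ hsub x' hx'U

theorem CCmono {m n : ℕ} (h : m ≤ n) : CC 𝒢 f g m ⊆ CC 𝒢 f g n :=
  fun _ hx => le_trans hx h

theorem DDmono {m n : ℕ} (h : m ≤ n) : DD 𝒢 f g m ⊆ DD 𝒢 f g n :=
  union_subset_union_left _ (prod_mono_left (CCmono h))

theorem CC0empty (hclose : ∀ x : X, ∃ G ∈ 𝒢, f x ∈ G ∧ g x ∈ G)
    (hlf : LocallyFinite (fun G : 𝒢 => (G : Set Y))) (hf : Continuous f)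
    {x : X} (hx : x ∈ CC 𝒢 f g 0) : False := by
  obtain ⟨G, hG, hfG, hgG⟩ := hclose x
  have hne : (KK 𝒢 f g x).Nonempty := ⟨G, hG, hfG, hgG⟩
  have : (KK 𝒢 f g x).ncard = 0 := Nat.le_zero.1 hx
  rw [Set.ncard_eq_zero (Kfin hlf hf x)] at this
  exact hne.ne_empty this

theorem DDclosed (hlf : LocallyFinite (fun G : 𝒢 => (G : Set Y)))
    (hopen : ∀ G ∈ 𝒢, IsOpen G) (hf : Continuous f) (hg : Continuous g) (n : ℕ) :
    IsClosed (DD 𝒢 f g n) :=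
  ((CCclosed hlf hopen hf hg n).prod isClosed_univ).union
    (isClosed_univ.prod (Set.Finite.isClosed (by simp)))

theorem mem_DD_of_snd {p : X × unitInterval} (h : p.2 = 0 ∨ p.2 = 1) {n : ℕ} :
    p ∈ DD 𝒢 f g n :=
  Or.inr ⟨trivial, by simpa using h⟩

theorem mem_DD_of_fst {p : X × unitInterval} {n : ℕ} (h : p.1 ∈ CC 𝒢 f g n) :
    p ∈ DD 𝒢 f g n :=
  Or.inl ⟨h, trivial⟩

variable (𝒢 f g)

/-- Induction invariant. -/
def Props (n : ℕ) (h : X × unitInterval → Y) : Prop :=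
  ContinuousOn h (DD 𝒢 f g n) ∧ (∀ x, h (x, 0) = f x) ∧ (∀ x, h (x, 1) = g x) ∧
  ∀ x ∈ CC 𝒢 f g n, ∀ t, h (x, t) ∈ ⋃₀ KK 𝒢 f g x

variable {𝒢 f g}

theorem base (hclose : ∀ x : X, ∃ G ∈ 𝒢, f x ∈ G ∧ g x ∈ G)
    (hlf : LocallyFinite (fun G : 𝒢 => (G : Set Y))) (hf : Continuous f) (hg : Continuous g) :
    ∃ h : X × unitInterval → Y, Props 𝒢 f g 0 h := by
  classical
  refine ⟨fun p => if ((p.2 : ℝ) < 1 / 2) then f p.1 else g p.1, ?_, ?_, ?_, ?_⟩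
  · have hsub : DD 𝒢 f g 0 ⊆
        ⋃ b : Bool, ((univ : Set X) ×ˢ ({bif b then 0 else 1} : Set unitInterval)) := by
      rintro ⟨x, t⟩ (⟨hx, -⟩ | ⟨-, ht⟩)
      · exact (CC0empty hclose hlf hf hx).elim
      · rcases ht with rfl | ht
        · exact mem_iUnion.2 ⟨true, trivial, rfl⟩
        · exact mem_iUnion.2 ⟨false, trivial, by simpa using ht⟩
    refine ContinuousOn.mono ?_ hsub
    refine (locallyFinite_of_finite _).continuousOn_iUnion
      (fun b => isClosed_univ.prod isClosed_singleton) ?_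
    rintro (_ | _)
    · refine ((hg.comp continuous_fst).continuousOn).congr ?_
      rintro ⟨x, t⟩ ⟨-, ht⟩
      have ht1 : t = 1 := by simpa using ht
      subst ht1
      have : ¬ (((1 : unitInterval) : ℝ) < 1 / 2) := by norm_num
      exact if_neg this
    · refine ((hf.comp continuous_fst).continuousOn).congr ?_
      rintro ⟨x, t⟩ ⟨-, ht⟩
      have ht0 : t = 0 := by simpa using ht
      subst ht0
      have : (((0 : unitInterval) : ℝ) < 1 / 2) := by norm_num
      exact if_pos this
  · intro x
    have : (((0 : unitInterval) : ℝ) < 1 / 2) := by norm_num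
    exact if_pos this
  · intro x
    have : ¬ (((1 : unitInterval) : ℝ) < 1 / 2) := by norm_num
    exact if_neg this
  · intro x hx
    exact (CC0empty hclose hlf hf hx).elim

theorem step (hopen : ∀ G ∈ 𝒢, IsOpen G)
    (hlf : LocallyFinite (fun G : 𝒢 => (G : Set Y)))
    (hAE : ∀ ℬ ⊆ 𝒢, ℬ.Nonempty → (⋂₀ ℬ).Nonempty → IsAE (⋃₀ ℬ) (X × unitInterval))
    (hf : Continuous f) (hg : Continuous g)
    (hclose : ∀ x : X, ∃ G ∈ 𝒢, f x ∈ G ∧ g x ∈ G)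
    (n : ℕ) (h : X × unitInterval → Y) (hP : Props 𝒢 f g n h) :
    ∃ h' : X × unitInterval → Y, Props 𝒢 f g (n + 1) h' ∧ EqOn h' h (DD 𝒢 f g n) := by
  classical
  obtain ⟨hcont, hb0, hb1, hval⟩ := hP
  have hext : ∀ S : Set (Set Y), ∃ u : X × unitInterval → Y,
      ContinuousOn u (closure (EE 𝒢 f g n S) ×ˢ (univ : Set unitInterval)) ∧
      ((EE 𝒢 f g n S).Nonempty → ∀ p, u p ∈ ⋃₀ S) ∧
      EqOn u h ((closure (EE 𝒢 f g n S) ×ˢ (univ : Set unitInterval)) ∩ DD 𝒢 f g n) := by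
    intro S
    rcases eq_empty_or_nonempty (EE 𝒢 f g n S) with hE | hEne
    · refine ⟨h, ?_, fun hne => absurd hE hne.ne_empty, fun p _ => rfl⟩
      rw [hE, closure_empty, Set.empty_prod]
      exact continuousOn_empty _
    · obtain ⟨x₀, hx₀⟩ := hEne
      have hKx₀ : KK 𝒢 f g x₀ = S := hx₀.1
      have hS𝒢 : S ⊆ 𝒢 := by rw [← hKx₀]; exact fun G hG => hG.1
      have hSne : S.Nonempty := by
        rw [← hKx₀]
        obtain ⟨G, hG, h1, h2⟩ := hclose x₀
        exact ⟨G, hG, h1, h2⟩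
      have hSint : (⋂₀ S).Nonempty := by
        refine ⟨f x₀, fun G hG => ?_⟩
        rw [← hKx₀] at hG
        exact hG.2.1
      have hAclosed : IsClosed
          ((closure (EE 𝒢 f g n S) ×ˢ (univ : Set unitInterval)) ∩ DD 𝒢 f g n) :=
        (isClosed_closure.prod isClosed_univ).inter (DDclosed hlf hopen hf hg n)
      have hmaps : MapsTo h
          ((closure (EE 𝒢 f g n S) ×ˢ (univ : Set unitInterval)) ∩ DD 𝒢 f g n) (⋃₀ S) := by
        rintro ⟨x, t⟩ ⟨⟨hxcl, -⟩, hD⟩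
        have hKS : KK 𝒢 f g x ⊆ S := closure_EE hopen hf hg hxcl
        rcases hD with ⟨hxC, -⟩ | ⟨-, ht⟩
        · exact sUnion_mono hKS (hval x hxC t)
        · obtain ⟨G, hG𝒢, hfG, hgG⟩ := hclose x
          have hGK : G ∈ KK 𝒢 f g x := ⟨hG𝒢, hfG, hgG⟩
          rcases ht with rfl | ht
          · rw [hb0 x]; exact ⟨G, hKS hGK, hfG⟩
          · have : t = 1 := by simpa using ht
            subst this
            rw [hb1 x]; exact ⟨G, hKS hGK, hgG⟩
      obtain ⟨u, hucont, humaps, huEq⟩ := hAE S hS𝒢 hSne hSint _ hAclosed h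
        (hcont.mono inter_subset_right) hmaps
      exact ⟨u, hucont.continuousOn, fun _ p => humaps (mem_univ p), huEq⟩
  choose ext hext1 hext2 hext3 using hext
  set h' : X × unitInterval → Y := fun p =>
    if hp : ∃ S, p.1 ∈ closure (EE 𝒢 f g n S) ∧ p.1 ∈ CC 𝒢 f g (n + 1) then ext hp.choose p
    else h p with hh'
  have key : ∀ S, ∀ p : X × unitInterval, p.1 ∈ closure (EE 𝒢 f g n S) →
      p.1 ∈ CC 𝒢 f g (n + 1) → h' p = ext S p := by
    intro S p hpcl hpC
    have hp : ∃ S, p.1 ∈ closure (EE 𝒢 f g n S) ∧ p.1 ∈ CC 𝒢 f g (n + 1) := ⟨S, hpcl, hpC⟩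
    have hS'cl : p.1 ∈ closure (EE 𝒢 f g n hp.choose) := hp.choose_spec.1
    rw [hh']
    simp only [dif_pos hp]
    by_cases hC : p.1 ∈ CC 𝒢 f g n
    · rw [hext3 hp.choose ⟨⟨hS'cl, trivial⟩, mem_DD_of_fst hC⟩,
        hext3 S ⟨⟨hpcl, trivial⟩, mem_DD_of_fst hC⟩]
    · have hE' : p.1 ∈ EE 𝒢 f g n hp.choose :=
        (closure_EE_cap_C hlf hopen hf hg hS'cl hpC).resolve_right hC
      have hE : p.1 ∈ EE 𝒢 f g n S :=
        (closure_EE_cap_C hlf hopen hf hg hpcl hpC).resolve_right hC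
      rw [EE_disjoint hE' hE]
  have hEqDD : EqOn h' h (DD 𝒢 f g n) := by
    intro p hp
    by_cases hp' : ∃ S, p.1 ∈ closure (EE 𝒢 f g n S) ∧ p.1 ∈ CC 𝒢 f g (n + 1)
    · obtain ⟨S, hScl, hSC⟩ := hp'
      rw [key S p hScl hSC]
      exact hext3 S ⟨⟨hScl, trivial⟩, hp⟩
    · rw [hh']
      simp only [dif_neg hp']
  refine ⟨h', ⟨?_, ?_, ?_, ?_⟩, hEqDD⟩
  · -- continuity on DD (n+1)
    have hcover : DD 𝒢 f g (n + 1) = ⋃ i : Option (Set (Set Y)),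
        (match i with
          | none => DD 𝒢 f g n
          | some S => (closure (EE 𝒢 f g n S) ∩ CC 𝒢 f g (n + 1)) ×ˢ
              (univ : Set unitInterval)) := by
      apply Subset.antisymm
      · rintro ⟨x, t⟩ hp
        rcases hp with ⟨hx, -⟩ | hb
        · by_cases hC : x ∈ CC 𝒢 f g n
          · exact mem_iUnion.2 ⟨none, mem_DD_of_fst hC⟩
          · have hcard : (KK 𝒢 f g x).ncard = n + 1 := by
              have h1 : ¬ (KK 𝒢 f g x).ncard ≤ n := hC
              have h2 : (KK 𝒢 f g x).ncard ≤ n + 1 := hx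
              omega
            have hE : x ∈ EE 𝒢 f g n (KK 𝒢 f g x) := ⟨rfl, hcard⟩
            exact mem_iUnion.2 ⟨some (KK 𝒢 f g x), ⟨⟨subset_closure hE, hx⟩, trivial⟩⟩
        · exact mem_iUnion.2 ⟨none, Or.inr hb⟩
      · rintro p hp
        rw [mem_iUnion] at hp
        obtain ⟨i, hi⟩ := hp
        match i with
        | none => exact DDmono (Nat.le_succ n) hi
        | some S => exact mem_DD_of_fst hi.1.2
    rw [hcover]
    refine LocallyFinite.continuousOn_iUnion ?_ ?_ ?_
    · intro p
      obtain ⟨U, hU, hfin⟩ := ((EElf hlf hf n).closure) p.1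
      refine ⟨U ×ˢ (univ : Set unitInterval), prod_mem_nhds hU Filter.univ_mem, ?_⟩
      have hsub : {i : Option (Set (Set Y)) | ((match i with
          | none => DD 𝒢 f g n
          | some S => (closure (EE 𝒢 f g n S) ∩ CC 𝒢 f g (n + 1)) ×ˢ
              (univ : Set unitInterval)) ∩ U ×ˢ (univ : Set unitInterval)).Nonempty} ⊆
          insert none (Option.some '' {S | (closure (EE 𝒢 f g n S) ∩ U).Nonempty}) := by
        rintro (_ | S) hi
        · exact mem_insert _ _
        · obtain ⟨q, ⟨⟨hq1, -⟩, -⟩, hqU, -⟩ := hi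
          exact Or.inr ⟨S, ⟨q.1, hq1, hqU⟩, rfl⟩
      exact ((hfin.image Option.some).insert none).subset hsub
    · rintro (_ | S)
      · exact DDclosed hlf hopen hf hg n
      · exact ((isClosed_closure.inter (CCclosed hlf hopen hf hg (n + 1))).prod isClosed_univ)
    · rintro (_ | S)
      · exact hcont.congr hEqDD
      · exact ((hext1 S).mono (prod_mono_left inter_subset_left)).congr
          (fun p hp => key S p hp.1.1 hp.1.2)
  · intro x
    rw [hEqDD (mem_DD_of_snd (Or.inl rfl))]
    exact hb0 x
  · intro x
    rw [hEqDD (mem_DD_of_snd (Or.inr rfl))]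
    exact hb1 x
  · intro x hx t
    by_cases hC : x ∈ CC 𝒢 f g n
    · rw [hEqDD (mem_DD_of_fst hC)]
      exact hval x hC t
    · have hcard : (KK 𝒢 f g x).ncard = n + 1 := by
        have h1 : ¬ (KK 𝒢 f g x).ncard ≤ n := hC
        have h2 : (KK 𝒢 f g x).ncard ≤ n + 1 := hx
        omega
      have hE : x ∈ EE 𝒢 f g n (KK 𝒢 f g x) := ⟨rfl, hcard⟩
      rw [key (KK 𝒢 f g x) (x, t) (subset_closure hE) hx]
      exact hext2 (KK 𝒢 f g x) ⟨x, hE⟩ (x, t)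

noncomputable def seq (hopen : ∀ G ∈ 𝒢, IsOpen G)
    (hlf : LocallyFinite (fun G : 𝒢 => (G : Set Y)))
    (hAE : ∀ ℬ ⊆ 𝒢, ℬ.Nonempty → (⋂₀ ℬ).Nonempty → IsAE (⋃₀ ℬ) (X × unitInterval))
    (hf : Continuous f) (hg : Continuous g)
    (hclose : ∀ x : X, ∃ G ∈ 𝒢, f x ∈ G ∧ g x ∈ G) :
    ∀ n : ℕ, {h : X × unitInterval → Y // Props 𝒢 f g n h}
  | 0 => ⟨(base hclose hlf hf hg).choose, (base hclose hlf hf hg).choose_spec⟩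
  | n + 1 =>
    ⟨(step hopen hlf hAE hf hg hclose n (seq hopen hlf hAE hf hg hclose n).1
        (seq hopen hlf hAE hf hg hclose n).2).choose,
      (step hopen hlf hAE hf hg hclose n (seq hopen hlf hAE hf hg hclose n).1
        (seq hopen hlf hAE hf hg hclose n).2).choose_spec.1⟩

theorem seq_succ_eq (hopen : ∀ G ∈ 𝒢, IsOpen G)
    (hlf : LocallyFinite (fun G : 𝒢 => (G : Set Y)))
    (hAE : ∀ ℬ ⊆ 𝒢, ℬ.Nonempty → (⋂₀ ℬ).Nonempty → IsAE (⋃₀ ℬ) (X × unitInterval))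
    (hf : Continuous f) (hg : Continuous g)
    (hclose : ∀ x : X, ∃ G ∈ 𝒢, f x ∈ G ∧ g x ∈ G) (n : ℕ) :
    EqOn (seq hopen hlf hAE hf hg hclose (n + 1)).1
      (seq hopen hlf hAE hf hg hclose n).1 (DD 𝒢 f g n) := by
  have := (step hopen hlf hAE hf hg hclose n (seq hopen hlf hAE hf hg hclose n).1
      (seq hopen hlf hAE hf hg hclose n).2).choose_spec.2
  exact this

theorem seq_agree (hopen : ∀ G ∈ 𝒢, IsOpen G)
    (hlf : LocallyFinite (fun G : 𝒢 => (G : Set Y)))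
    (hAE : ∀ ℬ ⊆ 𝒢, ℬ.Nonempty → (⋂₀ ℬ).Nonempty → IsAE (⋃₀ ℬ) (X × unitInterval))
    (hf : Continuous f) (hg : Continuous g)
    (hclose : ∀ x : X, ∃ G ∈ 𝒢, f x ∈ G ∧ g x ∈ G) {m n : ℕ} (hmn : m ≤ n) :
    EqOn (seq hopen hlf hAE hf hg hclose n).1
      (seq hopen hlf hAE hf hg hclose m).1 (DD 𝒢 f g m) := by
  induction hmn with
  | refl => exact fun p _ => rfl
  | @step n' h ih =>
    intro p hp
    exact (seq_succ_eq hopen hlf hAE hf hg hclose n' (DDmono h hp)).trans (ih hp)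

end Aux

/-- If `𝒢` is an open cover of `Y` weakly regular for `X × [0,1]`, then any two
`𝒢`-close continuous maps `f, g : X → Y` are `st 𝒢`-homotopic, by a homotopy whose
path at `x` lies in the star of any member of `𝒢` containing both `f x` and `g x`. -/
theorem stmt9 {X Y : Type*} [TopologicalSpace X] [TopologicalSpace Y]
    (𝒢 : Set (Set Y)) (hcov : ⋃₀ 𝒢 = univ) (hopen : ∀ G ∈ 𝒢, IsOpen G)
    (hlf : LocallyFinite (fun G : 𝒢 => (G : Set Y)))
    (hAE : ∀ ℬ ⊆ 𝒢, ℬ.Nonempty → (⋂₀ ℬ).Nonempty → IsAE (⋃₀ ℬ) (X × unitInterval))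
    (f g : X → Y) (hf : Continuous f) (hg : Continuous g)
    (hclose : ∀ x : X, ∃ G ∈ 𝒢, f x ∈ G ∧ g x ∈ G) :
    ∃ H : X × unitInterval → Y, Continuous H ∧
      (∀ x, H (x, 0) = f x) ∧ (∀ x, H (x, 1) = g x) ∧
      (∀ x, ∃ G ∈ 𝒢, ∀ t, H (x, t) ∈ coverStar 𝒢 G) ∧
      (∀ G ∈ 𝒢, ∀ x, f x ∈ G → g x ∈ G → ∀ t, H (x, t) ∈ coverStar 𝒢 G) := by
  classical
  set Hs := seq hopen hlf hAE hf hg hclose with hHs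
  refine ⟨fun p => (Hs ((KK 𝒢 f g p.1).ncard)).1 p, ?_, ?_, ?_, ?_, ?_⟩
  · rw [continuous_iff_continuousAt]
    intro p₀
    obtain ⟨U, hU, T, hTfin, hsub⟩ := Kloc hlf hf p₀.1
    set n₀ := T.ncard with hn₀
    have hUC : ∀ x ∈ U, x ∈ CC 𝒢 f g n₀ := fun x hx => Set.ncard_le_ncard (hsub x hx) hTfin
    have hmem : U ×ˢ (univ : Set unitInterval) ∈ nhds p₀ := prod_mem_nhds hU Filter.univ_mem
    have hCA : ContinuousAt (Hs n₀).1 p₀ := by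
      refine ((Hs n₀).2.1).continuousAt (Filter.mem_of_superset hmem ?_)
      rintro ⟨x, t⟩ ⟨hx, -⟩
      exact mem_DD_of_fst (hUC x hx)
    refine hCA.congr_of_eventuallyEq ?_
    refine Filter.mem_of_superset hmem ?_
    rintro ⟨x, t⟩ ⟨hx, -⟩
    have hxC : x ∈ CC 𝒢 f g (KK 𝒢 f g x).ncard := by simp only [CC, mem_setOf_eq]; exact le_refl _
    exact (seq_agree hopen hlf hAE hf hg hclose (hUC x hx)
      (mem_DD_of_fst hxC)).symm
  · exact fun x => (Hs ((KK 𝒢 f g x).ncard)).2.2.1 x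
  · exact fun x => (Hs ((KK 𝒢 f g x).ncard)).2.2.2.1 x
  · intro x
    obtain ⟨G, hG, hfG, hgG⟩ := hclose x
    refine ⟨G, hG, fun t => ?_⟩
    have hxC : x ∈ CC 𝒢 f g (KK 𝒢 f g x).ncard := by simp only [CC, mem_setOf_eq]; exact le_refl _
    have hv := (Hs ((KK 𝒢 f g x).ncard)).2.2.2.2 x hxC t
    obtain ⟨G', hG', hy⟩ := hv
    exact ⟨G', ⟨hG'.1, ⟨f x, hG'.2.1, hfG⟩⟩, hy⟩
  · intro G hG x hfG hgG t
    have hxC : x ∈ CC 𝒢 f g (KK 𝒢 f g x).ncard := by simp only [CC, mem_setOf_eq]; exact le_refl _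
    have hv := (Hs ((KK 𝒢 f g x).ncard)).2.2.2.2 x hxC t
    obtain ⟨G', hG', hy⟩ := hv
    exact ⟨G', ⟨hG'.1, ⟨f x, hG'.2.1, hfG⟩⟩, hy⟩
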